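/- For any ordered set partition π of {1, …, n}, rsb(π) equals the number of occurrences of the dashed pattern 2−31 in π, and lsb(π) equals the number of occurrences of 31−2 in π, where patterns in ordered set partitions are counted as follows: an occurrence of 2−31 is a pair (i, and a pair of adjacent elements a > b within a single block strictly to the right of the block of i) with b < i < a; an occurrence of 31−2 is a pair of adjacent elements a > b in some block together with an element i in a strictly later block with b < i < a. Blocks are written in decreasing order. -/

import Mathlib

namespace OSP

/-- `π` is an ordered set partition of `{1, …, n}` into `k` blocks. -/
def isOP (n k : ℕ) (π : List (Finset ℕ)) : Prop :=
  π.length = k ∧ (∀ B ∈ π, B.Nonempty) ∧ π.Pairwise Disjoint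
    ∧ ∀ x, (∃ B ∈ π, x ∈ B) ↔ x ∈ Finset.Icc 1 n

/-- Block descent set: positions `i`, `1 ≤ i ≤ k-1`, such that every element
of `B_{i+1}` is smaller than every element of `B_i`. -/
def bDesSet (π : List (Finset ℕ)) : Set ℕ :=
  {i | ∃ h : i < π.length, 0 < i ∧
    ∀ y ∈ π[i]'h, ∀ x ∈ π[i - 1]'(by omega), y < x}

/-- Block rise set: positions `i`, `1 ≤ i ≤ k-1`, such that every element of
`B_i` is smaller than every element of `B_{i+1}`. -/
def bAscSet (π : List (Finset ℕ)) : Set ℕ :=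
  {i | ∃ h : i < π.length, 0 < i ∧
    ∀ x ∈ π[i - 1]'(by omega), ∀ y ∈ π[i]'h, x < y}

/-- The set of openers (minima of the blocks) of `π`. -/
def openers (π : List (Finset ℕ)) : Set ℕ :=
  {x | ∃ B ∈ π, x ∈ B ∧ ∀ y ∈ B, x ≤ y}

/-- The set of closers (maxima of the blocks) of `π`. -/
def closers (π : List (Finset ℕ)) : Set ℕ :=
  {x | ∃ B ∈ π, x ∈ B ∧ ∀ y ∈ B, y ≤ x}

open Classical in
/-- `rsb π = Σᵢ rsbᵢ π` where `rsbᵢ π` is the number of blocks strictly to the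
right of the block containing `i` whose opener is `< i` and closer is `> i`. -/
noncomputable def rsb (n : ℕ) (π : List (Finset ℕ)) : ℕ :=
  ∑ i ∈ Finset.Icc 1 n, ((Finset.range π.length).filter fun j =>
    ∃ hj : j < π.length, (∃ t, ∃ ht : t < π.length, t < j ∧ i ∈ π[t]'ht)
      ∧ (∃ b ∈ π[j]'hj, b < i) ∧ (∃ b ∈ π[j]'hj, i < b)).card

open Classical in
/-- `lsb π = Σᵢ lsbᵢ π` where `lsbᵢ π` is the number of blocks strictly to the
left of the block containing `i` whose opener is `< i` and closer is `> i`. -/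
noncomputable def lsb (n : ℕ) (π : List (Finset ℕ)) : ℕ :=
  ∑ i ∈ Finset.Icc 1 n, ((Finset.range π.length).filter fun j =>
    ∃ hj : j < π.length, (∃ t, ∃ ht : t < π.length, j < t ∧ i ∈ π[t]'ht)
      ∧ (∃ b ∈ π[j]'hj, b < i) ∧ (∃ b ∈ π[j]'hj, i < b)).card

/-- `MAK π = rsb π + Σ_{c ∈ clos(π)} (n − c)`. -/
noncomputable def MAK (n : ℕ) (π : List (Finset ℕ)) : ℕ :=
  rsb n π + (π.map fun B => n - B.sup id).sum

/-- `MAK' π = rsb π + Σ_{o ∈ open(π)} (o − 1)`. -/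
noncomputable def MAK' (n : ℕ) (π : List (Finset ℕ)) : ℕ :=
  rsb n π + (π.map fun B => sInf (B : Set ℕ) - 1).sum

end OSP

/-- Number of occurrences of the dashed pattern `2-31` in an ordered set
partition `π`: quadruples `(i, j, a, b)` where `i` lies in some block strictly
to the left of block `j`, and `a > b` are adjacent elements of block `j` (no
element of block `j` lies strictly between them, blocks being written in
decreasing order), with `b < i < a`. -/
noncomputable def OSP.occ2d31 (π : List (Finset ℕ)) : ℕ :=
  {q : ℕ × ℕ × ℕ × ℕ | ∃ hj : q.2.1 < π.length,
    (∃ t, ∃ ht : t < π.length, t < q.2.1 ∧ q.1 ∈ π[t]'ht)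
      ∧ q.2.2.1 ∈ π[q.2.1]'hj ∧ q.2.2.2 ∈ π[q.2.1]'hj
      ∧ q.2.2.2 < q.1 ∧ q.1 < q.2.2.1
      ∧ ∀ c ∈ π[q.2.1]'hj, ¬(q.2.2.2 < c ∧ c < q.2.2.1)}.ncard

/-- Number of occurrences of the dashed pattern `31-2` in an ordered set
partition `π`: quadruples `(i, j, a, b)` where `a > b` are adjacent elements of
block `j` and `i` lies in some block strictly to the right of block `j`, with
`b < i < a`. -/
noncomputable def OSP.occ31d2 (π : List (Finset ℕ)) : ℕ :=
  {q : ℕ × ℕ × ℕ × ℕ | ∃ hj : q.2.1 < π.length,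
    (∃ t, ∃ ht : t < π.length, q.2.1 < t ∧ q.1 ∈ π[t]'ht)
      ∧ q.2.2.1 ∈ π[q.2.1]'hj ∧ q.2.2.2 ∈ π[q.2.1]'hj
      ∧ q.2.2.2 < q.1 ∧ q.1 < q.2.2.1
      ∧ ∀ c ∈ π[q.2.1]'hj, ¬(q.2.2.2 < c ∧ c < q.2.2.1)}.ncard

section AuxLemmas
open Classical

lemma card_filter_prod_aux (A B : Finset ℕ) (P : ℕ → ℕ → Prop)
    [DecidablePred fun p : ℕ × ℕ => P p.1 p.2] [∀ i, DecidablePred (P i)] :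
    ((A ×ˢ B).filter fun p => P p.1 p.2).card
      = ∑ i ∈ A, (B.filter fun j => P i j).card := by
  rw [Finset.card_filter, Finset.sum_product]
  refine Finset.sum_congr rfl fun i _ => Eq.trans ?_ (Finset.card_filter _ _).symm
  refine Finset.sum_congr rfl fun j _ => ?_
  congr

lemma key_aux (n : ℕ) (π : List (Finset ℕ))
    (hd : π.Pairwise Disjoint)
    (hmem : ∀ x, (∃ B ∈ π, x ∈ B) ↔ x ∈ Finset.Icc 1 n)
    (c : ℕ → ℕ → Prop) (hc : ∀ t j, c t j → t ≠ j) :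
    (∑ i ∈ Finset.Icc 1 n, ((Finset.range π.length).filter fun j =>
      ∃ hj : j < π.length, (∃ t, ∃ ht : t < π.length, c t j ∧ i ∈ π[t]'ht)
        ∧ (∃ b ∈ π[j]'hj, b < i) ∧ (∃ b ∈ π[j]'hj, i < b)).card)
    = {q : ℕ × ℕ × ℕ × ℕ | ∃ hj : q.2.1 < π.length,
        (∃ t, ∃ ht : t < π.length, c t q.2.1 ∧ q.1 ∈ π[t]'ht)
          ∧ q.2.2.1 ∈ π[q.2.1]'hj ∧ q.2.2.2 ∈ π[q.2.1]'hj
          ∧ q.2.2.2 < q.1 ∧ q.1 < q.2.2.1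
          ∧ ∀ x ∈ π[q.2.1]'hj, ¬(q.2.2.2 < x ∧ x < q.2.2.1)}.ncard := by
  classical
  have getD_eq : ∀ (j : ℕ) (hj : j < π.length), π.getD j ∅ = π[j]'hj := by
    intro j hj; exact List.getD_eq_getElem π ∅ hj
  have hdisj : ∀ (t j : ℕ) (ht : t < π.length) (hj : j < π.length), t ≠ j →
      ∀ x, x ∈ π[t]'ht → x ∉ π[j]'hj := by
    intro t j ht hj hne x hxt hxj
    rcases hne.lt_or_gt with hlt | hlt
    · exact (Finset.disjoint_left.mp
        (List.pairwise_iff_getElem.mp hd t j ht hj hlt)) hxt hxj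
    · exact (Finset.disjoint_left.mp
        (List.pairwise_iff_getElem.mp hd j t hj ht hlt)) hxj hxt
  set f : ℕ × ℕ → ℕ × ℕ × ℕ × ℕ := fun p =>
    (p.1, p.2, sInf {x | x ∈ π.getD p.2 ∅ ∧ p.1 < x},
      sSup {x | x ∈ π.getD p.2 ∅ ∧ x < p.1}) with hf
  set S : Finset (ℕ × ℕ) := (Finset.Icc 1 n ×ˢ Finset.range π.length).filter fun p =>
    ∃ hj : p.2 < π.length, (∃ t, ∃ ht : t < π.length, c t p.2 ∧ p.1 ∈ π[t]'ht)
      ∧ (∃ b ∈ π[p.2]'hj, b < p.1) ∧ (∃ b ∈ π[p.2]'hj, p.1 < b) with hSdef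
  have hinj : Function.Injective f := by
    intro p q hpq
    simp only [hf, Prod.mk.injEq] at hpq
    exact Prod.ext hpq.1 hpq.2.1
  have hset : {q : ℕ × ℕ × ℕ × ℕ | ∃ hj : q.2.1 < π.length,
        (∃ t, ∃ ht : t < π.length, c t q.2.1 ∧ q.1 ∈ π[t]'ht)
          ∧ q.2.2.1 ∈ π[q.2.1]'hj ∧ q.2.2.2 ∈ π[q.2.1]'hj
          ∧ q.2.2.2 < q.1 ∧ q.1 < q.2.2.1
          ∧ ∀ x ∈ π[q.2.1]'hj, ¬(q.2.2.2 < x ∧ x < q.2.2.1)}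
      = ↑(S.image f) := by
    ext ⟨i, j, a, b⟩
    simp only [Set.mem_setOf_eq, Finset.coe_image, Set.mem_image, Finset.mem_coe, hSdef,
      Finset.mem_filter, Finset.mem_product, Finset.mem_Icc, Finset.mem_range]
    constructor
    · rintro ⟨hj, ⟨t, ht, hctj, hit⟩, haB, hbB, hbi, hia, hno⟩
      have hIcc : 1 ≤ i ∧ i ≤ n := by
        have := (hmem i).mp ⟨π[t]'ht, List.getElem_mem ht, hit⟩
        simpa using this
      refine ⟨(i, j), ⟨⟨hIcc, hj⟩, hj, ⟨t, ht, hctj, hit⟩, ⟨b, hbB, hbi⟩, ⟨a, haB, hia⟩⟩, ?_⟩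
      simp only [hf, getD_eq j hj]
      refine Prod.ext rfl (Prod.ext rfl (Prod.ext ?_ ?_))
      · show sInf {x | x ∈ π[j]'hj ∧ i < x} = a
        have hne : ({x | x ∈ π[j]'hj ∧ i < x} : Set ℕ).Nonempty := ⟨a, haB, hia⟩
        have hmem' := Nat.sInf_mem hne
        have hle : sInf {x | x ∈ π[j]'hj ∧ i < x} ≤ a := Nat.sInf_le ⟨haB, hia⟩
        by_contra hne'
        exact hno _ hmem'.1 ⟨lt_trans hbi hmem'.2, lt_of_le_of_ne hle hne'⟩
      · show sSup {x | x ∈ π[j]'hj ∧ x < i} = b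
        have hbdd : BddAbove {x | x ∈ π[j]'hj ∧ x < i} := ⟨i, fun x hx => le_of_lt hx.2⟩
        have hne2 : ({x | x ∈ π[j]'hj ∧ x < i} : Set ℕ).Nonempty := ⟨b, hbB, hbi⟩
        have hmem2 := Nat.sSup_mem hne2 hbdd
        have hge : b ≤ sSup {x | x ∈ π[j]'hj ∧ x < i} := le_csSup hbdd ⟨hbB, hbi⟩
        by_contra hne'
        exact hno _ hmem2.1 ⟨lt_of_le_of_ne hge (Ne.symm hne'), lt_trans hmem2.2 hia⟩
    · rintro ⟨⟨i', j'⟩, ⟨⟨hi1, hjlen⟩, hj, ⟨t, ht, hctj, hit⟩, ⟨b0, hb0, hb0i⟩,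
        ⟨a0, ha0, hia0⟩⟩, hfeq⟩
      simp only [hf, Prod.mk.injEq] at hfeq
      obtain ⟨rfl, rfl, ha, hb⟩ := hfeq
      rw [getD_eq j' hj] at ha hb
      have hiB : i' ∉ π[j']'hj := hdisj t j' ht hj (hc t j' hctj) i' hit
      have hneGt : ({x | x ∈ π[j']'hj ∧ i' < x} : Set ℕ).Nonempty := ⟨a0, ha0, hia0⟩
      have haMem := Nat.sInf_mem hneGt
      have hbdd : BddAbove {x | x ∈ π[j']'hj ∧ x < i'} := ⟨i', fun x hx => le_of_lt hx.2⟩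
      have hneLt : ({x | x ∈ π[j']'hj ∧ x < i'} : Set ℕ).Nonempty := ⟨b0, hb0, hb0i⟩
      have hbMem := Nat.sSup_mem hneLt hbdd
      rw [ha] at haMem
      rw [hb] at hbMem
      refine ⟨hj, ⟨t, ht, hctj, hit⟩, haMem.1, hbMem.1, hbMem.2, haMem.2, ?_⟩
      intro x hxB ⟨hbx, hxa⟩
      rcases lt_trichotomy x i' with hxi | hxi | hxi
      · have : x ≤ sSup {x | x ∈ π[j']'hj ∧ x < i'} := le_csSup hbdd ⟨hxB, hxi⟩
        rw [hb] at this
        exact absurd hbx (not_lt_of_ge this)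
      · exact hiB (hxi ▸ hxB)
      · have : sInf {x | x ∈ π[j']'hj ∧ i' < x} ≤ x := Nat.sInf_le ⟨hxB, hxi⟩
        rw [ha] at this
        exact absurd hxa (not_lt_of_ge this)
  rw [hset, Set.ncard_coe_finset, Finset.card_image_of_injective S hinj, hSdef]
  exact (card_filter_prod_aux (Finset.Icc 1 n) (Finset.range π.length)
    (fun i j => ∃ hj : j < π.length, (∃ t, ∃ ht : t < π.length, c t j ∧ i ∈ π[t]'ht)
      ∧ (∃ b ∈ π[j]'hj, b < i) ∧ (∃ b ∈ π[j]'hj, i < b))).symm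

end AuxLemmas

/-- For any ordered set partition `π`, `rsb π` is the number of occurrences of
the dashed pattern `2-31` in `π`, and `lsb π` is the number of occurrences of
`31-2` in `π`. -/
theorem stmt_18 (n k : ℕ) (π : List (Finset ℕ)) (h : OSP.isOP n k π) :
    OSP.rsb n π = OSP.occ2d31 π ∧ OSP.lsb n π = OSP.occ31d2 π := by
  obtain ⟨hlen, hne, hd, hmem⟩ := h
  constructor
  · unfold OSP.rsb OSP.occ2d31; convert key_aux n π hd hmem (fun t j => t < j) (fun t j h => Nat.ne_of_lt h)
  · unfold OSP.lsb OSP.occ31d2; convert key_aux n π hd hmem (fun t j => j < t) (fun t j h => (Nat.ne_of_lt h).symm)
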